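/- Let X be a real normed space and X' its continuous dual. Suppose Y ⊆ ℝ^M, S : ℝ^M → X' maps y ↦ f_y, and e_{i,j} ∈ X'' are elements satisfying: (i) e_{1,1} = e_{2,2} = 0; (ii) ‖e_{2,1} - e_{1,1}‖ ≤ K‖y₁ - y₂‖₂; (iii) ⟨e_{2,1} - e_{2,2}, f_{y₁} - f_{y₂}⟩ ≥ C‖f_{y₁} - f_{y₂}‖^α with α ≥ 2, C > 0, K ≥ 0. Then ‖f_{y₁} - f_{y₂}‖ ≤ (K/C)^{1/(α-1)} · ‖y₁ - y₂‖₂^{1/(α-1)}. -/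

import Mathlib

/-- Abstract local Hölder stability: if the gradients `e_{i,j} ∈ X''` of the objective
satisfy optimality (`e_{1,1} = e_{2,2} = 0`), Lipschitz dependence on the measurements,
and an `α`-uniform convexity-type lower bound, then the solutions satisfy a Hölder bound. -/
theorem abstract_holder_stability {E : Type*} [NormedAddCommGroup E] [NormedSpace ℝ E]
    {M : ℕ} (Y : Set (EuclideanSpace ℝ (Fin M))) (y₁ y₂ : EuclideanSpace ℝ (Fin M))
    (hy₁ : y₁ ∈ Y) (hy₂ : y₂ ∈ Y)
    (f₁ f₂ : StrongDual ℝ E)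
    (e11 e21 e22 : StrongDual ℝ (StrongDual ℝ E))
    (K C α : ℝ) (hK : 0 ≤ K) (hC : 0 < C) (hα : 2 ≤ α)
    (h11 : e11 = 0) (h22 : e22 = 0)
    (hLip : ‖e21 - e11‖ ≤ K * ‖y₁ - y₂‖)
    (hconv : C * ‖f₁ - f₂‖ ^ α ≤ (e21 - e22) (f₁ - f₂)) :
    ‖f₁ - f₂‖ ≤ (K / C) ^ (1 / (α - 1)) * ‖y₁ - y₂‖ ^ (1 / (α - 1)) := by
  set t := ‖f₁ - f₂‖ with ht
  set d := ‖y₁ - y₂‖ with hd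
  have ht0 : 0 ≤ t := norm_nonneg _
  have hd0 : 0 ≤ d := norm_nonneg _
  have hα1 : 0 < α - 1 := by linarith
  have key : C * t ^ α ≤ K * d * t := by
    calc C * t ^ α ≤ (e21 - e22) (f₁ - f₂) := hconv
      _ ≤ ‖(e21 - e22) (f₁ - f₂)‖ := le_abs_self _
      _ ≤ ‖e21 - e22‖ * ‖f₁ - f₂‖ := (e21 - e22).le_opNorm _
      _ ≤ K * d * t := by
          apply mul_le_mul_of_nonneg_right _ ht0
          simpa [h11, h22] using hLip
  rcases eq_or_lt_of_le ht0 with h | h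
  · rw [← h]
    positivity
  · have hkey2 : t ^ (α - 1) ≤ K / C * d := by
      have : C * t ^ (α - 1) * t ≤ K * d * t := by
        have : t ^ α = t ^ (α - 1) * t := by
          have h2 := Real.rpow_add_one h.ne' (α - 1)
          rw [sub_add_cancel] at h2
          exact h2
        rw [this] at key; linarith [key]
      have h2 : C * t ^ (α - 1) ≤ K * d := le_of_mul_le_mul_right this h
      rw [div_mul_eq_mul_div, le_div_iff₀ hC]
      linarith [h2]
    calc t = (t ^ (α - 1)) ^ (1 / (α - 1)) := by
            rw [← Real.rpow_mul ht0, mul_one_div, div_self hα1.ne', Real.rpow_one]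
      _ ≤ (K / C * d) ^ (1 / (α - 1)) := by
            apply Real.rpow_le_rpow (by positivity) hkey2 (by positivity)
      _ = (K / C) ^ (1 / (α - 1)) * d ^ (1 / (α - 1)) := by
            rw [Real.mul_rpow (by positivity) hd0]
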